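/- Let 0 < m < 1, ε > 0 and δ > 0. Then there exists a wavenumber k > 0 such that the linear-stability matrix A_δ(k) has a real eigenvalue σ > 0. That is, when the dimensionless scent-decay rate satisfies m < 1, the uniform steady state of the nonlocal territorial model is linearly unstable to perturbations at some wavenumbers. -/

import Mathlib

/-- Auxiliary: if `(a-σ)(-b-σ)+cd = 0` then the determinant of the shifted
block matrix vanishes (the determinant factors as a difference of squares). -/
lemma det_aux (a b c d σ : ℝ) (h : (a - σ) * (-b - σ) + c * d = 0) :
    ((!![a,0,0,c;0,a,c,0;d,0,-b,0;0,d,0,-b] : Matrix (Fin 4) (Fin 4) ℝ)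
      - σ • (1 : Matrix (Fin 4) (Fin 4) ℝ)).det = 0 := by
  have hM : (!![a,0,0,c;0,a,c,0;d,0,-b,0;0,d,0,-b] : Matrix (Fin 4) (Fin 4) ℝ)
      - σ • (1 : Matrix (Fin 4) (Fin 4) ℝ)
      = !![a-σ,0,0,c;0,a-σ,c,0;d,0,-b-σ,0;0,d,0,-b-σ] := by
    ext i j
    fin_cases i <;> fin_cases j <;> simp [Matrix.one_apply]
  rw [hM]
  simp [Matrix.det_succ_row_zero, Fin.sum_univ_succ, Fin.castSucc, Fin.castAdd,
    Fin.castLE, Matrix.cons_val_succ]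
  have h32 : (Fin.succAbove (3 : Fin 4) (2 : Fin 3)) = 2 := by decide
  simp [h32]
  linear_combination ((a - σ) * (-b - σ) - c * d) * h

/-- The nonlocal linear-stability matrix `A_δ(k)` for parameters `m, ε, δ` and
wavenumber `k`: `A_δ(k) = [[a,0,0,c],[0,a,c,0],[d,0,−b,0],[0,d,0,−b]]` with
`a = (1/(1+m)² − 1)k²`, `b = (1+m)/ε`, `c = −2(2 − 1/(1+m))·(k/δ)·sin(δk)`,
`d = m/(ε(1+m))`. -/
noncomputable def Adelta (m ε δ k : ℝ) : Matrix (Fin 4) (Fin 4) ℝ :=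
  !![(1 / (1 + m) ^ 2 - 1) * k ^ 2, 0, 0,
       -2 * (2 - 1 / (1 + m)) * (k / δ) * Real.sin (δ * k);
     0, (1 / (1 + m) ^ 2 - 1) * k ^ 2,
       -2 * (2 - 1 / (1 + m)) * (k / δ) * Real.sin (δ * k), 0;
     m / (ε * (1 + m)), 0, -((1 + m) / ε), 0;
     0, m / (ε * (1 + m)), 0, -((1 + m) / ε)]

set_option maxHeartbeats 1000000 in
/-- For `0 < m < 1`, `ε > 0` and `δ > 0`, there is a wavenumber
`k > 0` at which the nonlocal linear-stability matrix `A_δ(k)` has a real eigenvalue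
`σ > 0`: the uniform steady state is linearly unstable at some wavenumbers. -/
theorem nonlocal_instability_exists
    (m ε δ : ℝ) (hm0 : 0 < m) (hm1 : m < 1) (hε : 0 < ε) (hδ : 0 < δ) :
    ∃ k : ℝ, 0 < k ∧ ∃ σ : ℝ, 0 < σ ∧
      (Adelta m ε δ k - σ • (1 : Matrix (Fin 4) (Fin 4) ℝ)).det = 0 := by
  have hm1' : (0:ℝ) < 1 + m := by linarith
  have hm1n : (1:ℝ) + m ≠ 0 := ne_of_gt hm1'
  set s : ℝ := m * (1 - m) / (2 + 4 * m) with hs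
  have hs0 : 0 < s := by
    apply div_pos (mul_pos hm0 (by linarith)) (by linarith)
  have hs' : (2 + 4 * m) * s = m * (1 - m) := by
    rw [hs]; field_simp
  set x : ℝ := Real.sqrt (2 * s) with hxdef
  have hx2 : x ^ 2 = 2 * s := Real.sq_sqrt (by positivity)
  have hx0 : 0 < x := Real.sqrt_pos.2 (by positivity)
  have hx1 : x ≤ 1 := by
    nlinarith [hx2, hs', sq_nonneg (1 - m), sq_nonneg (x - 1)]
  have hsin : x - x ^ 3 / 4 < Real.sin x := by
    have := Real.sin_gt_sub_cube hx0; nlinarith [pow_pos hx0 3]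
  have hx3 : x ^ 3 = 2 * s * x := by rw [pow_succ, hx2]
  -- key inequality coming from `m < 1`
  have hkey : (2 + m) * (1 + m) * x < 2 * (1 + 2 * m) * Real.sin x := by
    have h1 : (2 + 4 * m) * (x - x ^ 3 / 4) < (2 + 4 * m) * Real.sin x := by
      nlinarith [hsin]
    nlinarith [h1, hs', hx3, mul_pos (mul_pos hm0 (show (0:ℝ) < 1 - m by linarith)) hx0]
  set k : ℝ := x / δ with hk
  have hk0 : 0 < k := div_pos hx0 hδ
  have hδk : δ * k = x := by rw [hk]; field_simp
  set a : ℝ := (1 / (1 + m) ^ 2 - 1) * k ^ 2 with ha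
  set b : ℝ := (1 + m) / ε with hb
  set c : ℝ := -2 * (2 - 1 / (1 + m)) * (k / δ) * Real.sin (δ * k) with hc
  set d : ℝ := m / (ε * (1 + m)) with hd
  set E : ℝ := a * b - c * d with hE
  have hEval : E = m / (ε * (1 + m) ^ 2 * δ ^ 2) *
      (2 * (1 + 2 * m) * x * Real.sin x - (2 + m) * (1 + m) * x ^ 2) := by
    rw [hE, ha, hb, hc, hd, hδk, hk]
    field_simp
    ring
  have hEpos : 0 < E := by
    rw [hEval]
    apply mul_pos (by positivity)
    nlinarith [hkey, hx0]
  set B : ℝ := b - a with hB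
  set r : ℝ := Real.sqrt (B ^ 2 + 4 * E) with hr
  have hr2 : r ^ 2 = B ^ 2 + 4 * E := Real.sq_sqrt (by nlinarith [sq_nonneg B])
  have hrnn : 0 ≤ r := Real.sqrt_nonneg _
  set σ : ℝ := (-B + r) / 2 with hσ
  have hσpos : 0 < σ := by
    rw [hσ]
    nlinarith [hr2, hrnn, hEpos]
  refine ⟨k, hk0, σ, hσpos, ?_⟩
  have hquad : (a - σ) * (-b - σ) + c * d = 0 := by
    have h2 : σ ^ 2 + B * σ - E = 0 := by
      rw [hσ]; linear_combination hr2 / 4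
    rw [hB, hE] at h2
    linear_combination h2
  exact det_aux a b c d σ hquad
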